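/- (Causal recovery from minimal invariant risk.) In the linear SEM setting Y = βᵀX + N with squared-error loss and m environments, assume the risk E_N[N²] of β is the same in all environments, and that the system of equations in x ∈ ℝᵈ given by: 0 ≥ xᵀE_{X∼e₁}[XXᵀ]x + 2xᵀE_{N,X∼e₁}[NX] = xᵀE_{X∼e₂}[XXᵀ]x + 2xᵀE_{N,X∼e₂}[NX] = ⋯ = xᵀE_{X∼e_m}[XXᵀ]x + 2xᵀE_{N,X∼e_m}[NX] has x = 0 as its unique solution. If β̂ is a minimal invariant-risk predictor (its risk is equal across all m environments and is minimal among all coefficient vectors with equal risk across environments), then β̂ = β. -/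
import Mathlib


open MeasureTheory

/-- Causal recovery from minimal invariant risk: in the linear SEM
`Y = βᵀX + N` over `m` environments with squared-error loss, if the risk
`E[N²]` of `β` is the same in all environments and the system
`0 ≥ xᵀE_{e₁}[XXᵀ]x + 2xᵀE_{e₁}[NX] = ⋯ = xᵀE_{e_m}[XXᵀ]x + 2xᵀE_{e_m}[NX]`
has `x = 0` as its unique solution, then any minimal invariant-risk predictor
`β̂` (equal risk across environments, minimal among such) equals `β`. -/
theorem causal_recovery_minimal_invariant_risk
    {d m : ℕ} (hm : 0 < m) {Ω : Type*} [MeasurableSpace Ω]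
    (μ : Fin m → Measure Ω) (hprob : ∀ e, IsProbabilityMeasure (μ e))
    (X : Ω → Fin d → ℝ) (N : Ω → ℝ) (β βhat : Fin d → ℝ)
    (hint1 : ∀ (b : Fin d → ℝ) (e : Fin m),
      Integrable (fun ω => (∑ i, b i * X ω i) ^ 2) (μ e))
    (hint2 : ∀ (b : Fin d → ℝ) (e : Fin m),
      Integrable (fun ω => (∑ i, b i * X ω i) * N ω) (μ e))
    (hint3 : ∀ e : Fin m, Integrable (fun ω => (N ω) ^ 2) (μ e))
    -- the risk `E[N²]` of the causal predictor `β` is invariant across environments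
    (hNinv : ∀ e e' : Fin m, ∫ ω, (N ω) ^ 2 ∂(μ e) = ∫ ω, (N ω) ^ 2 ∂(μ e'))
    -- the system of equations has the unique solution `x = 0`
    (huniq : ∀ x : Fin d → ℝ,
      (∀ e e' : Fin m,
        (∫ ω, (∑ i, x i * X ω i) ^ 2 ∂(μ e))
            + 2 * (∫ ω, (∑ i, x i * X ω i) * N ω ∂(μ e))
          = (∫ ω, (∑ i, x i * X ω i) ^ 2 ∂(μ e'))
            + 2 * (∫ ω, (∑ i, x i * X ω i) * N ω ∂(μ e'))) →
      (∀ e : Fin m,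
        (∫ ω, (∑ i, x i * X ω i) ^ 2 ∂(μ e))
            + 2 * (∫ ω, (∑ i, x i * X ω i) * N ω ∂(μ e)) ≤ 0) →
      x = 0)
    -- `β̂` is an invariant-risk predictor
    (hinv : ∀ e e' : Fin m,
      ∫ ω, ((∑ i, β i * X ω i) + N ω - ∑ i, βhat i * X ω i) ^ 2 ∂(μ e)
        = ∫ ω, ((∑ i, β i * X ω i) + N ω - ∑ i, βhat i * X ω i) ^ 2 ∂(μ e'))
    -- `β̂` is minimal among invariant-risk predictors
    (hminimal : ∀ b : Fin d → ℝ,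
      (∀ e e' : Fin m,
        ∫ ω, ((∑ i, β i * X ω i) + N ω - ∑ i, b i * X ω i) ^ 2 ∂(μ e)
          = ∫ ω, ((∑ i, β i * X ω i) + N ω - ∑ i, b i * X ω i) ^ 2 ∂(μ e')) →
      ∀ e : Fin m,
        ∫ ω, ((∑ i, β i * X ω i) + N ω - ∑ i, βhat i * X ω i) ^ 2 ∂(μ e)
          ≤ ∫ ω, ((∑ i, β i * X ω i) + N ω - ∑ i, b i * X ω i) ^ 2 ∂(μ e)) :
    βhat = β := by

  set x : Fin d → ℝ := fun i => β i - βhat i with hx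
  have key : ∀ e, ∫ ω, ((∑ i, β i * X ω i) + N ω - ∑ i, βhat i * X ω i) ^ 2 ∂(μ e)
      = ((∫ ω, (∑ i, x i * X ω i) ^ 2 ∂(μ e))
          + 2 * (∫ ω, (∑ i, x i * X ω i) * N ω ∂(μ e))) + ∫ ω, (N ω) ^ 2 ∂(μ e) := by
    intro e
    have hpt : ∀ ω, ((∑ i, β i * X ω i) + N ω - ∑ i, βhat i * X ω i) ^ 2
        = ((∑ i, x i * X ω i) ^ 2 + 2 * ((∑ i, x i * X ω i) * N ω)) + (N ω) ^ 2 := by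
      intro ω
      have hs : ∑ i, x i * X ω i = (∑ i, β i * X ω i) - ∑ i, βhat i * X ω i := by
        simp [hx, sub_mul, Finset.sum_sub_distrib]
      rw [hs]; ring
    simp_rw [hpt]
    have B := integral_add (μ := μ e) ((hint1 x e).add ((hint2 x e).const_mul 2)) (hint3 e)
    have A := integral_add (μ := μ e) (hint1 x e) ((hint2 x e).const_mul 2)
    have C := integral_const_mul (μ := μ e) 2 (fun ω => (∑ i, x i * X ω i) * N ω)
    simp only [Pi.add_apply] at A B
    rw [B, A, C]
  have hbeta_inv : ∀ e e' : Fin m,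
      ∫ ω, ((∑ i, β i * X ω i) + N ω - ∑ i, β i * X ω i) ^ 2 ∂(μ e)
        = ∫ ω, ((∑ i, β i * X ω i) + N ω - ∑ i, β i * X ω i) ^ 2 ∂(μ e') := by
    intro e e'; simp only [add_sub_cancel_left]; exact hNinv e e'
  have hle : ∀ e : Fin m,
      (∫ ω, (∑ i, x i * X ω i) ^ 2 ∂(μ e))
        + 2 * (∫ ω, (∑ i, x i * X ω i) * N ω ∂(μ e)) ≤ 0 := by
    intro e
    have h1 := hminimal β hbeta_inv e
    rw [key e] at h1
    simp only [add_sub_cancel_left] at h1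
    linarith
  have heq : ∀ e e' : Fin m,
      (∫ ω, (∑ i, x i * X ω i) ^ 2 ∂(μ e))
          + 2 * (∫ ω, (∑ i, x i * X ω i) * N ω ∂(μ e))
        = (∫ ω, (∑ i, x i * X ω i) ^ 2 ∂(μ e'))
          + 2 * (∫ ω, (∑ i, x i * X ω i) * N ω ∂(μ e')) := by
    intro e e'
    have h := hinv e e'
    rw [key e, key e'] at h
    have hn := hNinv e e'
    linarith
  have hx0 := huniq x heq hle
  funext i
  have := congrFun hx0 i
  simp only [hx, Pi.zero_apply] at this
  linarith
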